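/- Let A and B be closed linear subspaces of a real Hilbert space H with orthogonal projections P_A and P_B. For any x ∈ H, define b₀ := x and, for every integer n ≥ 1, aₙ := P_A(b_{n−1}) and bₙ := P_B(aₙ). Then both sequences (aₙ) and (bₙ) converge in norm to P_{A∩B}(x), the orthogonal projection of x onto A ∩ B. -/

import Mathlib

open Filter

/-- `P` is the metric (nearest-point) projection onto the set `C`. -/
def IsProjOn {H : Type*} [NormedAddCommGroup H] (P : H → H) (C : Set H) : Prop :=
  ∀ x : H, P x ∈ C ∧ ∀ y ∈ C, ‖x - P x‖ ≤ ‖x - y‖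

lemma isProjOn_eq' {H : Type*} [NormedAddCommGroup H] [InnerProductSpace ℝ H]
    (K : Submodule ℝ H) [Submodule.HasOrthogonalProjection K] {P : H → H}
    (hP : ∀ x : H, P x ∈ (K : Set H) ∧ ∀ y ∈ (K : Set H), ‖x - P x‖ ≤ ‖x - y‖) (z : H) :
    P z = Submodule.orthogonalProjection K z := by
  have hmem := (hP z).1
  have hmin : ‖z - P z‖ = ⨅ w : (K : Set H), ‖z - w‖ := by
    apply le_antisymm
    · exact le_ciInf fun w => (hP z).2 w w.2
    · have hbdd : BddBelow (Set.range fun w : (K : Set H) => ‖z - (w : H)‖) :=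
        ⟨0, by rintro r ⟨w, rfl⟩; positivity⟩
      exact ciInf_le hbdd (⟨P z, hmem⟩ : (K : Set H))
  have horth := (Submodule.norm_eq_iInf_iff_real_inner_eq_zero K hmem).1 hmin
  exact (Submodule.eq_starProjection_of_mem_of_inner_eq_zero hmem horth).symm

section vN
variable {H : Type*} [NormedAddCommGroup H] [InnerProductSpace ℝ H] [CompleteSpace H]

local notation "⟪" x ", " y "⟫" => @inner ℝ _ _ x y

lemma vonNeumann_aux (A B : Submodule ℝ H)
    [Submodule.HasOrthogonalProjection A] [Submodule.HasOrthogonalProjection B]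
    [Submodule.HasOrthogonalProjection (A ⊓ B : Submodule ℝ H)]
    (hA : IsClosed (A : Set H)) (x : H) (a b : ℕ → H) (hb0 : b 0 = x)
    (ha : ∀ n : ℕ, a (n + 1) = (Submodule.orthogonalProjection A (b n) : H))
    (hbrec : ∀ n : ℕ, b (n + 1) = (Submodule.orthogonalProjection B (a (n + 1)) : H)) :
    Tendsto (fun n : ℕ => a (n + 1)) atTop
      (nhds (Submodule.orthogonalProjection (A ⊓ B : Submodule ℝ H) x : H)) ∧
    Tendsto (fun n : ℕ => b (n + 1)) atTop
      (nhds (Submodule.orthogonalProjection (A ⊓ B : Submodule ℝ H) x : H)) := by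
  set pa : H →L[ℝ] H := A.subtypeL.comp (Submodule.orthogonalProjection A) with hpa
  set pb : H →L[ℝ] H := B.subtypeL.comp (Submodule.orthogonalProjection B) with hpb
  set W : H →L[ℝ] H := pa.comp (pb.comp pa) with hW
  -- basic facts
  have pa_mem : ∀ z, pa z ∈ A := fun z => (Submodule.orthogonalProjection A z).2
  have pb_mem : ∀ z, pb z ∈ B := fun z => (Submodule.orthogonalProjection B z).2
  have pa_fix : ∀ z ∈ A, pa z = z := by
    intro z hz
    have := Submodule.orthogonalProjection_mem_subspace_eq_self (K := A) ⟨z, hz⟩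
    simpa [hpa] using congrArg (Subtype.val) this
  have pb_fix : ∀ z ∈ B, pb z = z := by
    intro z hz
    have := Submodule.orthogonalProjection_mem_subspace_eq_self (K := B) ⟨z, hz⟩
    simpa [hpb] using congrArg (Subtype.val) this
  have pa_orth : ∀ z, ∀ w ∈ A, ⟪z - pa z, w⟫ = 0 := fun z =>
    Submodule.starProjection_inner_eq_zero (K := A) z
  have pb_orth : ∀ z, ∀ w ∈ B, ⟪z - pb z, w⟫ = 0 := fun z =>
    Submodule.starProjection_inner_eq_zero (K := B) z
  have pa_adj : ∀ u v : H, ⟪pa u, v⟫ = ⟪u, pa v⟫ := fun u v =>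
    Submodule.inner_starProjection_left_eq_right (K := A) u v
  have pb_adj : ∀ u v : H, ⟪pb u, v⟫ = ⟪u, pb v⟫ := fun u v =>
    Submodule.inner_starProjection_left_eq_right (K := B) u v
  have pa_pyth : ∀ z : H, ‖pa z‖ ^ 2 + ‖z - pa z‖ ^ 2 = ‖z‖ ^ 2 := by
    intro z
    have h0 : ⟪pa z, z - pa z⟫ = 0 := by
      rw [real_inner_comm]; exact pa_orth z (pa z) (pa_mem z)
    have : ‖pa z + (z - pa z)‖ ^ 2 = ‖pa z‖ ^ 2 + 2 * ⟪pa z, z - pa z⟫ + ‖z - pa z‖ ^ 2 :=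
      norm_add_sq_real _ _
    rw [h0] at this
    simp only [add_sub_cancel] at this
    linarith
  have pb_pyth : ∀ z : H, ‖pb z‖ ^ 2 + ‖z - pb z‖ ^ 2 = ‖z‖ ^ 2 := by
    intro z
    have h0 : ⟪pb z, z - pb z⟫ = 0 := by
      rw [real_inner_comm]; exact pb_orth z (pb z) (pb_mem z)
    have : ‖pb z + (z - pb z)‖ ^ 2 = ‖pb z‖ ^ 2 + 2 * ⟪pb z, z - pb z⟫ + ‖z - pb z‖ ^ 2 :=
      norm_add_sq_real _ _
    rw [h0] at this
    simp only [add_sub_cancel] at this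
    linarith
  have pa_norm : ∀ z : H, ‖pa z‖ ≤ ‖z‖ := by
    intro z
    have := pa_pyth z
    nlinarith [norm_nonneg (pa z), norm_nonneg z, sq_nonneg (‖z - pa z‖)]
  have pb_norm : ∀ z : H, ‖pb z‖ ≤ ‖z‖ := by
    intro z
    have := pb_pyth z
    nlinarith [norm_nonneg (pb z), norm_nonneg z, sq_nonneg (‖z - pb z‖)]
  have W_adj : ∀ u v : H, ⟪W u, v⟫ = ⟪u, W v⟫ := by
    intro u v
    simp only [hW, ContinuousLinearMap.comp_apply]
    rw [pa_adj, pb_adj, pa_adj]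
  set x' : H := pa x with hx'
  set u : ℕ → H := fun n => (W ^ n) x' with hu
  have u_succ : ∀ n, u (n + 1) = W (u n) := by
    intro n
    simp only [hu, pow_succ', ContinuousLinearMap.mul_apply]
  have u_memA : ∀ n, u n ∈ A := by
    intro n
    cases n with
    | zero => simpa [hu] using pa_mem x
    | succ n =>
      rw [u_succ n]
      exact pa_mem _
  have Wz : ∀ z ∈ A, W z = pa (pb z) := by
    intro z hz
    simp only [hW, ContinuousLinearMap.comp_apply, pa_fix z hz]
  have u_succ' : ∀ n, u (n + 1) = pa (pb (u n)) := fun n => by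
    rw [u_succ n, Wz _ (u_memA n)]
  set s : ℕ → ℝ := fun k => ⟪(W ^ k) x', x'⟫ with hs
  have shift : ∀ n m : ℕ, ⟪u n, u m⟫ = s (n + m) := by
    intro n
    induction n with
    | zero => intro m; simp only [hu, hs, pow_zero, ContinuousLinearMap.one_apply,
        Nat.zero_add]; exact real_inner_comm _ _
    | succ n ih =>
      intro m
      have : ⟪u (n+1), u m⟫ = ⟪u n, u (m+1)⟫ := by
        rw [u_succ n, W_adj, ← u_succ m]
      rw [this, ih (m+1)]
      congr 1
      omega
  have s_even : ∀ j, s (2 * j) = ‖u j‖ ^ 2 := by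
    intro j
    rw [show 2 * j = j + j by omega, ← shift j j, real_inner_self_eq_norm_sq]
  have s_odd : ∀ j, s (2 * j + 1) = ‖pb (u j)‖ ^ 2 := by
    intro j
    have h1 : s (2 * j + 1) = ⟪u j, u (j + 1)⟫ := by
      rw [shift j (j+1)]; congr 1; omega
    rw [h1, u_succ' j, ← pa_adj, pa_fix _ (u_memA j)]
    have h2 : ⟪u j - pb (u j), pb (u j)⟫ = 0 := pb_orth (u j) _ (pb_mem _)
    have h3 : ⟪u j, pb (u j)⟫ = ⟪pb (u j), pb (u j)⟫ := by
      have := inner_sub_left (𝕜 := ℝ) (u j) (pb (u j)) (pb (u j))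
      rw [h2] at this
      linarith
    rw [h3, real_inner_self_eq_norm_sq]
  have s_nonneg : ∀ k, 0 ≤ s k := by
    intro k
    rcases Nat.even_or_odd k with ⟨j, hj⟩ | ⟨j, hj⟩
    · rw [show k = 2 * j by omega, s_even]; positivity
    · rw [show k = 2 * j + 1 by omega, s_odd]; positivity
  have s_anti : ∀ k, s (k + 1) ≤ s k := by
    intro k
    rcases Nat.even_or_odd k with ⟨j, hj⟩ | ⟨j, hj⟩
    · rw [show k = 2 * j by omega, s_even, s_odd]
      have := pb_norm (u j)
      nlinarith [norm_nonneg (pb (u j)), norm_nonneg (u j)]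
    · rw [show k = 2 * j + 1 by omega, show 2 * j + 1 + 1 = 2 * (j + 1) by omega,
        s_even, s_odd]
      rw [u_succ' j]
      have := pa_norm (pb (u j))
      nlinarith [norm_nonneg (pa (pb (u j))), norm_nonneg (pb (u j))]
  -- s converges
  have s_anti' : Antitone s := antitone_nat_of_succ_le s_anti
  have s_bdd : BddBelow (Set.range s) := ⟨0, by rintro r ⟨k, rfl⟩; exact s_nonneg k⟩
  have s_tendsto : Tendsto s atTop (nhds (⨅ k, s k)) := tendsto_atTop_ciInf s_anti' s_bdd
  set L := ⨅ k, s k with hL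
  have u_cauchy : CauchySeq u := by
    rw [Metric.cauchySeq_iff']
    intro ε hε
    have hε8 : (0:ℝ) < ε ^ 2 / 8 := by positivity
    obtain ⟨N, hN⟩ := (Metric.tendsto_atTop.1 s_tendsto) (ε ^ 2 / 8) hε8
    refine ⟨N, fun n hn => ?_⟩
    have expand : ‖u n - u N‖ ^ 2 = s (2 * n) - 2 * s (n + N) + s (2 * N) := by
      have h := norm_sub_sq_real (u n) (u N)
      rw [shift n N] at h
      rw [h, ← s_even n, ← s_even N]
    have h1 := hN (2 * n) (by omega)
    have h2 := hN (2 * N) (by omega)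
    have h3 := hN (n + N) (by omega)
    rw [Real.dist_eq] at h1 h2 h3
    have habs1 := abs_lt.1 h1
    have habs2 := abs_lt.1 h2
    have habs3 := abs_lt.1 h3
    have hsq : ‖u n - u N‖ ^ 2 < ε ^ 2 := by rw [expand]; nlinarith
    have hlt : ‖u n - u N‖ < ε := by nlinarith [norm_nonneg (u n - u N)]
    rwa [dist_eq_norm]
  obtain ⟨l, hl⟩ := cauchySeq_tendsto_of_complete u_cauchy
  have l_memA : l ∈ A := hA.mem_of_tendsto hl (Eventually.of_forall u_memA)
  have hl1 : Tendsto (fun n => u (n + 1)) atTop (nhds l) :=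
    hl.comp (tendsto_add_atTop_nat 1)
  have hcomp : Tendsto (fun n => pa (pb (u n))) atTop (nhds (pa (pb l))) := by
    exact ((pa.continuous.tendsto _).comp ((pb.continuous.tendsto _).comp hl))
  have fixw : pa (pb l) = l := by
    refine tendsto_nhds_unique hcomp ?_
    have heq : (fun n => pa (pb (u n))) = fun n => u (n + 1) := by
      funext n; rw [u_succ']
    rw [heq]; exact hl1
  have hnorm : ‖pb l‖ = ‖l‖ := by
    refine le_antisymm (pb_norm l) ?_
    calc ‖l‖ = ‖pa (pb l)‖ := by rw [fixw]
    _ ≤ ‖pb l‖ := pa_norm _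
  have pbl : pb l = l := by
    have hp := pb_pyth l
    have hsq : ‖pb l‖ ^ 2 = ‖l‖ ^ 2 := by rw [hnorm]
    have hz : ‖l - pb l‖ ^ 2 = 0 := by linarith
    have : l - pb l = 0 := by
      rwa [pow_eq_zero_iff (by norm_num), norm_eq_zero] at hz
    have := sub_eq_zero.1 this
    exact this.symm
  have l_memB : l ∈ B := pbl ▸ pb_mem l
  have l_memAB : l ∈ A ⊓ B := Submodule.mem_inf.2 ⟨l_memA, l_memB⟩
  have horthn : ∀ n, ∀ w ∈ A ⊓ B, ⟪x - u n, w⟫ = 0 := by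
    intro n
    induction n with
    | zero =>
      intro w hw
      have h0 : u 0 = pa x := by simp [hu, hx']
      rw [h0]
      exact pa_orth x w (Submodule.mem_inf.1 hw).1
    | succ n ih =>
      intro w hw
      obtain ⟨hwA, hwB⟩ := Submodule.mem_inf.1 hw
      have e : x - u (n + 1) =
          (x - u n) + ((u n - pb (u n)) + (pb (u n) - pa (pb (u n)))) := by
        rw [u_succ']; abel
      rw [e, inner_add_left, inner_add_left, ih w hw, pb_orth (u n) w hwB,
        pa_orth (pb (u n)) w hwA]
      ring
  have horthl : ∀ w ∈ A ⊓ B, ⟪x - l, w⟫ = 0 := by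
    intro w hw
    have ht : Tendsto (fun n => ⟪x - u n, w⟫) atTop (nhds ⟪x - l, w⟫) :=
      Tendsto.inner (tendsto_const_nhds.sub hl) tendsto_const_nhds
    have heq : (fun n => ⟪x - u n, w⟫) = fun _ => (0:ℝ) :=
      funext fun n => horthn n w hw
    rw [heq] at ht
    exact (tendsto_nhds_unique ht tendsto_const_nhds)
  have hproj : (Submodule.orthogonalProjection (A ⊓ B : Submodule ℝ H) x : H) = l :=
    Submodule.eq_starProjection_of_mem_of_inner_eq_zero l_memAB horthl
  have pa_apply : ∀ z : H, pa z = (Submodule.orthogonalProjection A z : H) := fun z => rfl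
  have pb_apply : ∀ z : H, pb z = (Submodule.orthogonalProjection B z : H) := fun z => rfl
  have key : ∀ n : ℕ, a (n + 1) = u n := by
    intro n
    induction n with
    | zero =>
      rw [ha 0, hb0, ← pa_apply]
      simp [hu, hx']
    | succ n ih =>
      rw [ha (n + 1), hbrec n, ih, ← pa_apply, ← pb_apply, ← u_succ']
  constructor
  · rw [hproj]
    have heq : (fun n : ℕ => a (n + 1)) = u := funext key
    rw [heq]; exact hl
  · rw [hproj]
    have heq : (fun n : ℕ => b (n + 1)) = fun n => pb (u n) := by
      funext n; rw [hbrec n, key n, pb_apply]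
    rw [heq, ← pbl]
    exact (pb.continuous.tendsto _).comp hl
end vN

/-- von Neumann: for two closed linear subspaces `A`, `B` of a real Hilbert space, both
alternating projection sequences `aₙ = P_A(b_{n−1})`, `bₙ = P_B(aₙ)` converge in norm to
`P_{A∩B}(x)`. -/
theorem stmt17 {H : Type*} [NormedAddCommGroup H] [InnerProductSpace ℝ H] [CompleteSpace H]
    (A B : Submodule ℝ H) (hA : IsClosed (A : Set H)) (hB : IsClosed (B : Set H))
    (PA PB PAB : H → H)
    (hPA : IsProjOn PA (A : Set H)) (hPB : IsProjOn PB (B : Set H))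
    (hPAB : IsProjOn PAB ((A ⊓ B : Submodule ℝ H) : Set H))
    (x : H) (a b : ℕ → H) (hb0 : b 0 = x)
    (ha : ∀ n : ℕ, a (n + 1) = PA (b n))
    (hbrec : ∀ n : ℕ, b (n + 1) = PB (a (n + 1))) :
    Tendsto (fun n : ℕ => a (n + 1)) atTop (nhds (PAB x)) ∧
    Tendsto (fun n : ℕ => b (n + 1)) atTop (nhds (PAB x)) := by

  haveI : CompleteSpace A := hA.completeSpace_coe
  haveI : CompleteSpace B := hB.completeSpace_coe
  have hAB : IsClosed ((A ⊓ B : Submodule ℝ H) : Set H) := by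
    rw [Submodule.coe_inf]; exact hA.inter hB
  haveI : CompleteSpace (A ⊓ B : Submodule ℝ H) := hAB.completeSpace_coe
  have hPA' : ∀ z, PA z = (Submodule.orthogonalProjection A z : H) := isProjOn_eq' A hPA
  have hPB' : ∀ z, PB z = (Submodule.orthogonalProjection B z : H) := isProjOn_eq' B hPB
  have hPAB' : ∀ z, PAB z = (Submodule.orthogonalProjection (A ⊓ B : Submodule ℝ H) z : H) :=
    isProjOn_eq' _ hPAB
  rw [hPAB']
  exact vonNeumann_aux A B hA x a b hb0 (fun n => by rw [ha n, hPA' (b n)])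
    (fun n => by rw [hbrec n, hPB' (a (n + 1))])
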